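/- Theorem 1 (Soundness of PoLoc, order-statistic form). In the PoLoc setup, let f := n − H.card and assume f < n. Let r₁ ≤ r₂ ≤ … ≤ r_n be the values R(C i, d̂ i, P̃, u), i ∈ Fin n, listed in nondecreasing order. Then dist P P̃ ≤ r_{f+1}; that is, the (f+1)-th smallest directional uncertainty in the true direction of Waldo is at least the true deviation of Waldo from its claimed location, even if Waldo and up to f challengers are Byzantine. -/

import Mathlib

open scoped Classical

/-- The plane. -/
local notation "E" => EuclideanSpace ℝ (Fin 2)

/-- Directional uncertainty `R(C, d̂, P̃, u) = s + sqrt (d̂² − d̃² + s²)`,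
where `d̃ = ‖C − P̃‖` and `s = ⟪C − P̃, u⟫_ℝ`. -/
noncomputable def dirUnc (C Pt : EuclideanSpace ℝ (Fin 2)) (dhat : ℝ)
    (u : EuclideanSpace ℝ (Fin 2)) : ℝ :=
  (inner ℝ (C - Pt) u : ℝ) +
    Real.sqrt (dhat ^ 2 - ‖C - Pt‖ ^ 2 + (inner ℝ (C - Pt) u : ℝ) ^ 2)

/-- The `(k+1)`-th smallest (0-indexed `k`-th) value of a finite family of
reals: the value at position `k` after sorting in nondecreasing order. -/
noncomputable def kthSmallest {n : ℕ} (g : Fin n → ℝ) (k : Fin n) : ℝ :=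
  (g ∘ Tuple.sort g) k

lemma honest_bound (C Pt P : EuclideanSpace ℝ (Fin 2)) (dhat : ℝ) (hne : P ≠ Pt)
    (h : dist C P ≤ dhat) :
    dist P Pt ≤ dirUnc C Pt dhat (‖P - Pt‖⁻¹ • (P - Pt)) := by
  set d : ℝ := ‖P - Pt‖ with hd_def
  have hd : 0 < d := by
    simpa [hd_def] using norm_sub_pos_iff.mpr hne
  set t : ℝ := (inner ℝ (C - Pt) (P - Pt) : ℝ) with ht_def
  have hs : (inner ℝ (C - Pt) (‖P - Pt‖⁻¹ • (P - Pt)) : ℝ) = d⁻¹ * t := by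
    rw [real_inner_smul_right]
  set s : ℝ := d⁻¹ * t with hs_def
  have hsd : s * d = t := by
    rw [hs_def]; field_simp
  have hkey : ‖C - P‖ ^ 2 = ‖C - Pt‖ ^ 2 - 2 * t + d ^ 2 := by
    have : C - P = (C - Pt) - (P - Pt) := by abel
    rw [this, @norm_sub_sq_real]
  have hdist : ‖C - P‖ ≤ dhat := by
    rwa [dist_eq_norm] at h
  have hCP : ‖C - P‖ ^ 2 ≤ dhat ^ 2 := by
    have h0 : (0:ℝ) ≤ ‖C - P‖ := norm_nonneg _
    nlinarith
  have hsq : (d - s) ^ 2 ≤ dhat ^ 2 - ‖C - Pt‖ ^ 2 + s ^ 2 := by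
    nlinarith
  have hsqrt : d - s ≤ Real.sqrt (dhat ^ 2 - ‖C - Pt‖ ^ 2 + s ^ 2) := by
    calc d - s ≤ |d - s| := le_abs_self _
    _ = Real.sqrt ((d - s) ^ 2) := (Real.sqrt_sq_eq_abs _).symm
    _ ≤ _ := Real.sqrt_le_sqrt hsq
  have : dist P Pt = d := by rw [dist_eq_norm]
  rw [this, dirUnc, hs]
  linarith

/-- Theorem 1 (Soundness of PoLoc, order-statistic form): with `f := n − H.card`
Byzantine challengers, the `(f+1)`-th smallest directional uncertainty in the
true direction of Waldo is at least the true deviation of Waldo from its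
claimed location. -/
theorem poloc_soundness_order_statistic (n : ℕ) (C : Fin n → E) (dhat : Fin n → ℝ)
    (Pt P : E) (hne : P ≠ Pt) (H : Finset (Fin n))
    (hH : ∀ i ∈ H, dist (C i) P ≤ dhat i) (hf : n - H.card < n) :
    dist P Pt ≤
      kthSmallest (fun i => dirUnc (C i) Pt (dhat i) (‖P - Pt‖⁻¹ • (P - Pt)))
        ⟨n - H.card, hf⟩ := by
  set g : Fin n → ℝ := fun i => dirUnc (C i) Pt (dhat i) (‖P - Pt‖⁻¹ • (P - Pt)) with hg
  set σ := Tuple.sort g with hσ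
  set k : Fin n := ⟨n - H.card, hf⟩ with hk
  by_contra hcon
  push_neg at hcon
  have hmono : Monotone (g ∘ σ) := Tuple.monotone_sort g
  set T : Finset (Fin n) := (Finset.Iic k).image σ with hT
  have hTcard : T.card = n - H.card + 1 := by
    rw [hT, Finset.card_image_of_injective _ σ.injective, Fin.card_Iic]
  have hTsub : T ⊆ Hᶜ := by
    intro i hi
    rw [hT, Finset.mem_image] at hi
    obtain ⟨j, hj, rfl⟩ := hi
    rw [Finset.mem_Iic] at hj
    have h1 : g (σ j) ≤ g (σ k) := hmono hj
    have h2 : g (σ j) < dist P Pt := lt_of_le_of_lt h1 hcon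
    simp only [Finset.mem_compl]
    intro hmem
    have := honest_bound (C (σ j)) Pt P (dhat (σ j)) hne (hH _ hmem)
    exact absurd this (not_le.mpr h2)
  have hle : T.card ≤ Hᶜ.card := Finset.card_le_card hTsub
  rw [hTcard, Finset.card_compl, Fintype.card_fin] at hle
  omega
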